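/- Let Θ be a nonempty index set and (κ_θ)_{θ∈Θ} a family of Markov kernels on ℝ^d with nonlinear Markov operator P̄f(x) = sup_{θ∈Θ} ∫ f dκ_θ(x,·); assume x ↦ P̄f(x) is Borel measurable for every bounded Borel measurable f ≥ 0. Let Φ : [0,∞) → [0,∞) be increasing with lim_{r→∞} Φ(r) = ∞, Ψ : ℝ^d × ℝ^d → [0,∞) Borel measurable, and assume the Harnack-type inequality Φ(P̄f(x)) ≤ P̄(Φ∘f)(y)·e^{Ψ(x,y)} for all bounded Borel measurable f ≥ 0 and all x, y ∈ ℝ^d. Suppose μ is a quasi-invariant linear expectation of P̄ and that there are jointly Borel measurable functions p_θ : ℝ^d × ℝ^d → [0,∞) with κ_θ(x, A) = ∫_A p_θ(x,y) μ(dy) for all θ, x and Borel A, and a constant K > 0 such that (1/K)·p_{θ₁}(x,y) ≤ p_{θ₂}(x,y) ≤ K·p_{θ₁}(x,y) for all θ₁, θ₂ ∈ Θ and x, y ∈ ℝ^d. Then P̄ has at most one invariant linear expectation: any two invariant linear expectations μ₀ and μ₁ of P̄ are equal. -/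

import Mathlib

open MeasureTheory ProbabilityTheory Filter
open scoped ENNReal

private lemma auxCancel {a b c e : ℝ≥0∞} (hb : b ≠ ⊤) (he : e ≠ ⊤)
    (h1 : a ≤ b) (h2 : c ≤ e) (h : a + c = b + e) : a = b := by
  have ha : a ≠ ⊤ := (h1.trans_lt hb.lt_top).ne
  have hc : c ≠ ⊤ := (h2.trans_lt he.lt_top).ne
  have hr : a.toReal + c.toReal = b.toReal + e.toReal := by
    rw [← ENNReal.toReal_add ha hc, ← ENNReal.toReal_add hb he, h]
  have h1' := ENNReal.toReal_mono hb h1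
  have h2' := ENNReal.toReal_mono he h2
  exact (ENNReal.toReal_eq_toReal_iff' ha hb).mp (by linarith)

/-- The nonlinear Markov operator `P̄ f x = ⨆ θ, ∫ f dκ_θ(x,·)` associated with a family
of Markov kernels on `ℝ^d`. -/
noncomputable def nlOp {d : ℕ} {Θ : Type*}
    (κ : Θ → Kernel (EuclideanSpace ℝ (Fin d)) (EuclideanSpace ℝ (Fin d)))
    (f : EuclideanSpace ℝ (Fin d) → ℝ) (x : EuclideanSpace ℝ (Fin d)) : ℝ :=
  ⨆ θ, ∫ y, f y ∂(κ θ x)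

theorem stmt_3 {d : ℕ} {Θ : Type*} [Nonempty Θ]
    (κ : Θ → Kernel (EuclideanSpace ℝ (Fin d)) (EuclideanSpace ℝ (Fin d)))
    (hκ : ∀ θ, IsMarkovKernel (κ θ))
    (hPmeas : ∀ f : EuclideanSpace ℝ (Fin d) → ℝ, Measurable f → (∀ y, 0 ≤ f y) →
      (∃ C, ∀ y, f y ≤ C) → Measurable (nlOp κ f))
    (Φ : ℝ → ℝ)
    (hΦmono : MonotoneOn Φ (Set.Ici 0))
    (hΦnonneg : ∀ r ∈ Set.Ici (0:ℝ), 0 ≤ Φ r)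
    (hΦtop : Tendsto Φ atTop atTop)
    (Ψ : EuclideanSpace ℝ (Fin d) → EuclideanSpace ℝ (Fin d) → ℝ)
    (hΨmeas : Measurable (Function.uncurry Ψ))
    (hΨnonneg : ∀ x y, 0 ≤ Ψ x y)
    (hHarnack : ∀ f : EuclideanSpace ℝ (Fin d) → ℝ, Measurable f → (∀ y, 0 ≤ f y) →
      (∃ C, ∀ y, f y ≤ C) → ∀ x y,
      Φ (nlOp κ f x) ≤ nlOp κ (fun z => Φ (f z)) y * Real.exp (Ψ x y))
    -- μ is a quasi-invariant linear expectation of P̄, with witness g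
    (μ : Measure (EuclideanSpace ℝ (Fin d))) [IsProbabilityMeasure μ]
    (g : EuclideanSpace ℝ (Fin d) → ℝ) (hgmeas : Measurable g)
    (hg0 : ∀ x, 0 ≤ g x) (hgbd : ∃ C, ∀ x, g x ≤ C)
    (hquasi : ∀ f : EuclideanSpace ℝ (Fin d) → ℝ, Measurable f → (∀ y, 0 ≤ f y) →
      (∃ C, ∀ y, f y ≤ C) → ∫ x, nlOp κ f x ∂μ ≤ ∫ x, g x * f x ∂μ)
    -- densities p_θ of the kernels with respect to μ
    (p : Θ → EuclideanSpace ℝ (Fin d) → EuclideanSpace ℝ (Fin d) → ℝ)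
    (hpmeas : ∀ θ, Measurable (Function.uncurry (p θ)))
    (hp0 : ∀ θ x y, 0 ≤ p θ x y)
    (hdens : ∀ θ x (A : Set (EuclideanSpace ℝ (Fin d))), MeasurableSet A →
      κ θ x A = ∫⁻ y in A, ENNReal.ofReal (p θ x y) ∂μ)
    -- uniform comparability of the densities
    (K : ℝ) (hK : 0 < K)
    (hcomp : ∀ θ₁ θ₂ x y, (1/K) * p θ₁ x y ≤ p θ₂ x y ∧ p θ₂ x y ≤ K * p θ₁ x y)
    -- two invariant linear expectations
    (μ₀ μ₁ : Measure (EuclideanSpace ℝ (Fin d)))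
    [IsProbabilityMeasure μ₀] [IsProbabilityMeasure μ₁]
    (hinv₀ : ∀ f : EuclideanSpace ℝ (Fin d) → ℝ, Measurable f → (∀ y, 0 ≤ f y) →
      (∃ C, ∀ y, f y ≤ C) → ∫ x, nlOp κ f x ∂μ₀ = ∫ x, f x ∂μ₀)
    (hinv₁ : ∀ f : EuclideanSpace ℝ (Fin d) → ℝ, Measurable f → (∀ y, 0 ≤ f y) →
      (∃ C, ∀ y, f y ≤ C) → ∫ x, nlOp κ f x ∂μ₁ = ∫ x, f x ∂μ₁) :
    μ₀ = μ₁ := by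
  classical
  obtain ⟨θ₀⟩ := (inferInstance : Nonempty Θ)
  have prob : ∀ θ x, IsProbabilityMeasure (κ θ x) := fun θ x => (hκ θ).isProbabilityMeasure x
  have hle1 : ∀ θ x (A : Set (EuclideanSpace ℝ (Fin d))), (κ θ x A).toReal ≤ 1 := by
    intro θ x A
    haveI := prob θ x
    have h := prob_le_one (μ := κ θ x) (s := A)
    simpa using ENNReal.toReal_mono (by simp) h
  have hindInt : ∀ (A : Set (EuclideanSpace ℝ (Fin d))), MeasurableSet A → ∀ (c : ℝ) θ x,
      ∫ y, A.indicator (fun _ => c) y ∂(κ θ x) = (κ θ x A).toReal * c := by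
    intro A hA c θ x
    rw [integral_indicator_const c hA, smul_eq_mul, measureReal_def]
  have hbddR : ∀ (A : Set (EuclideanSpace ℝ (Fin d))) x,
      BddAbove (Set.range fun θ => (κ θ x A).toReal) :=
    fun A x => ⟨1, by rintro - ⟨θ, rfl⟩; exact hle1 θ x A⟩
  have hnlInd : ∀ (A : Set (EuclideanSpace ℝ (Fin d))), MeasurableSet A → ∀ (c : ℝ), 0 ≤ c → ∀ x,
      nlOp κ (A.indicator fun _ => c) x = (⨆ θ, (κ θ x A).toReal) * c := by
    intro A hA c hc x
    unfold nlOp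
    simp_rw [hindInt A hA c]
    rw [Real.iSup_mul_of_nonneg hc]
  have hindMeas : ∀ (A : Set (EuclideanSpace ℝ (Fin d))), MeasurableSet A → ∀ (c : ℝ),
      Measurable (A.indicator fun _ => c) := fun A hA c => measurable_const.indicator hA
  have hind0 : ∀ (A : Set (EuclideanSpace ℝ (Fin d))) (c : ℝ), 0 ≤ c →
      ∀ y, 0 ≤ A.indicator (fun _ => c) y := fun A c hc y =>
    Set.indicator_nonneg (fun _ _ => hc) y
  have hindC : ∀ (A : Set (EuclideanSpace ℝ (Fin d))) (c : ℝ), 0 ≤ c →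
      ∀ y, A.indicator (fun _ => c) y ≤ c := by
    intro A c hc y
    by_cases h : y ∈ A <;> simp [Set.indicator, h, hc]
  -- Step 2: all-or-nothing for null sets of the kernels
  have hZero : ∀ (A : Set (EuclideanSpace ℝ (Fin d))), MeasurableSet A →
      ∀ θ' x', κ θ' x' A = 0 → ∀ θ x, κ θ x A = 0 := by
    intro A hA θ' x' h0 θ x
    have hall : ∀ θ'', κ θ'' x' A = 0 := by
      intro θ''
      have hd' := hdens θ' x' A hA
      have hd'' := hdens θ'' x' A hA
      have hm' : Measurable fun y => ENNReal.ofReal (p θ' x' y) :=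
        ((hpmeas θ').of_uncurry_left).ennreal_ofReal
      have hmono : κ θ'' x' A ≤ ENNReal.ofReal K * κ θ' x' A := by
        rw [hd', hd'', ← lintegral_const_mul _ hm']
        refine lintegral_mono fun y => ?_
        rw [← ENNReal.ofReal_mul hK.le]
        exact ENNReal.ofReal_le_ofReal (hcomp θ' θ'' x' y).2
      rw [h0, mul_zero] at hmono
      exact le_antisymm hmono zero_le
    by_contra hne
    have hpos : 0 < (κ θ x A).toReal := ENNReal.toReal_pos hne (measure_ne_top _ _)
    set ε := ⨆ θ'', (κ θ'' x A).toReal with hε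
    have hεpos : 0 < ε := lt_of_lt_of_le hpos (le_ciSup (hbddR A x) θ)
    obtain ⟨r, hr1, hr0⟩ : ∃ r, Φ 0 * Real.exp (Ψ x x') < Φ r ∧ 0 ≤ r :=
      ((hΦtop.eventually_gt_atTop _).and (eventually_ge_atTop 0)).exists
    set c := r / ε with hcdef
    have hc : 0 ≤ c := div_nonneg hr0 hεpos.le
    set f := A.indicator fun _ => c with hf
    have hnlf : nlOp κ f x = r := by
      rw [hf, hnlInd A hA c hc x, ← hε, hcdef, mul_comm]
      exact div_mul_cancel₀ r hεpos.ne'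
    have hΦf : nlOp κ (fun z => Φ (f z)) x' = Φ 0 := by
      unfold nlOp
      have hint : ∀ θ'', ∫ y, Φ (f y) ∂(κ θ'' x') = Φ 0 := by
        intro θ''
        haveI := prob θ'' x'
        have hae : (fun y => Φ (f y)) =ᵐ[κ θ'' x'] fun _ => Φ 0 := by
          filter_upwards [measure_eq_zero_iff_ae_notMem.mp (hall θ'')] with y hy
          simp only [hf, Set.indicator_of_notMem hy]
        rw [integral_congr_ae hae, integral_const, measureReal_def, measure_univ, ENNReal.toReal_one, one_smul]
      simp_rw [hint]
      exact ciSup_const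
    have hH := hHarnack f (hindMeas A hA c) (hind0 A c hc) ⟨c, hindC A c hc⟩ x x'
    rw [hnlf, hΦf] at hH
    exact absurd hH (not_le.mpr hr1)
  -- Step 1: invariance under the linear kernel κ θ₀
  have hkerInv : ∀ (ν : Measure (EuclideanSpace ℝ (Fin d))), IsProbabilityMeasure ν →
      (∀ f : EuclideanSpace ℝ (Fin d) → ℝ, Measurable f → (∀ y, 0 ≤ f y) →
        (∃ C, ∀ y, f y ≤ C) → ∫ x, nlOp κ f x ∂ν = ∫ x, f x ∂ν) →
      ∀ A : Set (EuclideanSpace ℝ (Fin d)), MeasurableSet A →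
        ∫⁻ x, κ θ₀ x A ∂ν = ν A := by
    intro ν hνP hinv A hA
    haveI := hνP
    have key : ∀ B : Set (EuclideanSpace ℝ (Fin d)), MeasurableSet B →
        ∫⁻ x, κ θ₀ x B ∂ν ≤ ν B := by
      intro B hB
      set f := B.indicator fun _ => (1:ℝ) with hfdef
      have hfm : Measurable f := hindMeas B hB 1
      have hf0 : ∀ y, 0 ≤ f y := hind0 B 1 zero_le_one
      have hfC : ∀ y, f y ≤ 1 := hindC B 1 zero_le_one
      have hinvf := hinv f hfm hf0 ⟨1, hfC⟩
      have hrhs : ∫ x, f x ∂ν = (ν B).toReal := by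
        rw [hfdef, integral_indicator_const (1:ℝ) hB, smul_eq_mul, mul_one, measureReal_def]
      have hκm : Measurable fun x => (κ θ₀ x B).toReal :=
        (Kernel.measurable_coe _ hB).ennreal_toReal
      have hlow : ∀ x, (κ θ₀ x B).toReal ≤ nlOp κ f x := by
        intro x
        have h := hnlInd B hB 1 zero_le_one x
        rw [← hfdef, mul_one] at h
        rw [h]
        exact le_ciSup (hbddR B x) θ₀
      have hup : ∀ x, nlOp κ f x ≤ 1 := by
        intro x
        have h := hnlInd B hB 1 zero_le_one x
        rw [← hfdef, mul_one] at h
        rw [h]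
        exact ciSup_le fun θ => hle1 θ x B
      have hnlm : Measurable (nlOp κ f) := hPmeas f hfm hf0 ⟨1, hfC⟩
      have hint1 : Integrable (fun x => (κ θ₀ x B).toReal) ν := by
        refine (integrable_const (1:ℝ)).mono' hκm.aestronglyMeasurable ?_
        refine Eventually.of_forall fun x => ?_
        rw [Real.norm_eq_abs, abs_of_nonneg ENNReal.toReal_nonneg]
        exact hle1 θ₀ x B
      have hint2 : Integrable (nlOp κ f) ν := by
        refine (integrable_const (1:ℝ)).mono' hnlm.aestronglyMeasurable ?_
        refine Eventually.of_forall fun x => ?_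
        rw [Real.norm_eq_abs, abs_of_nonneg (ENNReal.toReal_nonneg.trans (hlow x))]
        exact hup x
      have hreal : ∫ x, (κ θ₀ x B).toReal ∂ν ≤ (ν B).toReal := by
        calc ∫ x, (κ θ₀ x B).toReal ∂ν ≤ ∫ x, nlOp κ f x ∂ν := integral_mono hint1 hint2 hlow
          _ = ∫ x, f x ∂ν := hinvf
          _ = (ν B).toReal := hrhs
      have hconv : ∫⁻ x, κ θ₀ x B ∂ν = ENNReal.ofReal (∫ x, (κ θ₀ x B).toReal ∂ν) := by
        rw [ofReal_integral_eq_lintegral_ofReal hint1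
          (Eventually.of_forall fun x => ENNReal.toReal_nonneg)]
        exact lintegral_congr fun x => (ENNReal.ofReal_toReal (measure_ne_top _ _)).symm
      rw [hconv]
      calc ENNReal.ofReal (∫ x, (κ θ₀ x B).toReal ∂ν)
          ≤ ENNReal.ofReal (ν B).toReal := ENNReal.ofReal_le_ofReal hreal
        _ = ν B := ENNReal.ofReal_toReal (measure_ne_top _ _)
    have h1 := key A hA
    have h2 := key Aᶜ hA.compl
    have hsum : (∫⁻ x, κ θ₀ x A ∂ν) + (∫⁻ x, κ θ₀ x Aᶜ ∂ν) = 1 := by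
      rw [← lintegral_add_left (Kernel.measurable_coe _ hA)]
      have heach : ∀ x, κ θ₀ x A + κ θ₀ x Aᶜ = 1 := by
        intro x
        haveI := prob θ₀ x
        rw [measure_add_measure_compl hA, measure_univ]
      simp_rw [heach]
      simp
    have hsum' : ν A + ν Aᶜ = 1 := by rw [measure_add_measure_compl hA, measure_univ]
    refine auxCancel (measure_ne_top ν A) (measure_ne_top ν Aᶜ) h1 h2 ?_
    rw [hsum, hsum']
  -- Step 3: Hahn decomposition and conclusion
  obtain ⟨s, hs, hs₁, hs₂⟩ := hahn_decomposition (μ := μ₀) (ν := μ₁)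
  by_cases heq : μ₀ s = μ₁ s
  · -- equal on the Hahn set forces equality everywhere
    ext A hA
    have e₁ : μ₀ (A ∩ s) = μ₁ (A ∩ s) := by
      have l1 : μ₁ (s ∩ A) ≤ μ₀ (s ∩ A) := hs₁ _ (hs.inter hA) Set.inter_subset_left
      have l2 : μ₁ (s \ A) ≤ μ₀ (s \ A) := hs₁ _ (hs.diff hA) Set.diff_subset
      have d0 : μ₀ (s ∩ A) + μ₀ (s \ A) = μ₀ s := measure_inter_add_diff s hA
      have d1 : μ₁ (s ∩ A) + μ₁ (s \ A) = μ₁ s := measure_inter_add_diff s hA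
      rw [Set.inter_comm A s]
      exact (auxCancel (measure_ne_top μ₀ _) (measure_ne_top μ₀ _) l1 l2
        (by rw [d1, d0]; exact heq.symm)).symm
    have e₂ : μ₀ (A \ s) = μ₁ (A \ s) := by
      have hcompl : μ₀ sᶜ = μ₁ sᶜ := by
        rw [measure_compl hs (measure_ne_top _ _), measure_compl hs (measure_ne_top _ _),
          measure_univ, measure_univ, heq]
      have l1 : μ₀ (sᶜ ∩ A) ≤ μ₁ (sᶜ ∩ A) := hs₂ _ (hs.compl.inter hA) Set.inter_subset_left
      have l2 : μ₀ (sᶜ \ A) ≤ μ₁ (sᶜ \ A) := hs₂ _ (hs.compl.diff hA) Set.diff_subset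
      have d0 : μ₀ (sᶜ ∩ A) + μ₀ (sᶜ \ A) = μ₀ sᶜ := measure_inter_add_diff sᶜ hA
      have d1 : μ₁ (sᶜ ∩ A) + μ₁ (sᶜ \ A) = μ₁ sᶜ := measure_inter_add_diff sᶜ hA
      rw [Set.diff_eq, Set.inter_comm A sᶜ]
      exact auxCancel (measure_ne_top μ₁ _) (measure_ne_top μ₁ _) l1 l2
        (by rw [d1, d0]; exact hcompl)
    calc μ₀ A = μ₀ (A ∩ s) + μ₀ (A \ s) := (measure_inter_add_diff A hs).symm
      _ = μ₁ (A ∩ s) + μ₁ (A \ s) := by rw [e₁, e₂]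
      _ = μ₁ A := measure_inter_add_diff A hs
  · exfalso
    have hlt : μ₁ s < μ₀ s := lt_of_le_of_ne (hs₁ s hs subset_rfl) (Ne.symm heq)
    set φ := fun x => κ θ₀ x s with hφ
    have hφm : Measurable φ := Kernel.measurable_coe _ hs
    have hφ1 : ∀ x, φ x ≤ 1 := by
      intro x
      haveI := prob θ₀ x
      exact prob_le_one
    have I₀ : ∫⁻ x, φ x ∂μ₀ = μ₀ s := hkerInv μ₀ inferInstance hinv₀ s hs
    have I₁ : ∫⁻ x, φ x ∂μ₁ = μ₁ s := hkerInv μ₁ inferInstance hinv₁ s hs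
    have hres_s : μ₁.restrict s ≤ μ₀.restrict s := by
      refine Measure.le_iff.mpr fun A hA => ?_
      rw [Measure.restrict_apply hA, Measure.restrict_apply hA]
      exact hs₁ _ (hA.inter hs) Set.inter_subset_right
    have hres_c : μ₀.restrict sᶜ ≤ μ₁.restrict sᶜ := by
      refine Measure.le_iff.mpr fun A hA => ?_
      rw [Measure.restrict_apply hA, Measure.restrict_apply hA]
      exact hs₂ _ (hA.inter hs.compl) Set.inter_subset_right
    set ν₀ := μ₀.restrict s - μ₁.restrict s with hν₀def
    set ν₁ := μ₁.restrict sᶜ - μ₀.restrict sᶜ with hν₁def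
    have hν₀eq : ν₀ + μ₁.restrict s = μ₀.restrict s := Measure.sub_add_cancel_of_le hres_s
    have hν₁eq : ν₁ + μ₀.restrict sᶜ = μ₁.restrict sᶜ := Measure.sub_add_cancel_of_le hres_c
    have split₀ : ∫⁻ x, φ x ∂μ₀ =
        (∫⁻ x, φ x ∂ν₀) + ((∫⁻ x, φ x ∂(μ₁.restrict s)) + ∫⁻ x, φ x ∂(μ₀.restrict sᶜ)) := by
      conv_lhs => rw [← Measure.restrict_add_restrict_compl (μ := μ₀) hs]
      rw [lintegral_add_measure, ← hν₀eq, lintegral_add_measure, add_assoc]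
    have split₁ : ∫⁻ x, φ x ∂μ₁ =
        (∫⁻ x, φ x ∂ν₁) + ((∫⁻ x, φ x ∂(μ₁.restrict s)) + ∫⁻ x, φ x ∂(μ₀.restrict sᶜ)) := by
      conv_lhs => rw [← Measure.restrict_add_restrict_compl (μ := μ₁) hs]
      rw [lintegral_add_measure, ← hν₁eq, lintegral_add_measure]
      ring
    have hmass₀ : ν₀ Set.univ + μ₁ s = μ₀ s := by
      have h := congrArg (fun m : Measure (EuclideanSpace ℝ (Fin d)) => m Set.univ) hν₀eq
      simpa [Measure.restrict_apply_univ] using h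
    have hmass₁ : ν₁ Set.univ + μ₀ sᶜ = μ₁ sᶜ := by
      have h := congrArg (fun m : Measure (EuclideanSpace ℝ (Fin d)) => m Set.univ) hν₁eq
      simpa [Measure.restrict_apply_univ] using h
    have hν₀fin : ν₀ Set.univ ≠ ⊤ := by
      have h : ν₀ Set.univ ≤ μ₀ s := by rw [← hmass₀]; exact self_le_add_right _ _
      exact ne_top_of_le_ne_top (measure_ne_top μ₀ s) h
    have hν₁fin : ν₁ Set.univ ≠ ⊤ := by
      have h : ν₁ Set.univ ≤ μ₁ sᶜ := by rw [← hmass₁]; exact self_le_add_right _ _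
      exact ne_top_of_le_ne_top (measure_ne_top μ₁ sᶜ) h
    have hAle : ∫⁻ x, φ x ∂ν₀ ≤ ν₀ Set.univ := by
      calc ∫⁻ x, φ x ∂ν₀ ≤ ∫⁻ _, 1 ∂ν₀ := lintegral_mono hφ1
        _ = ν₀ Set.univ := lintegral_one
    have habfin : (∫⁻ x, φ x ∂(μ₁.restrict s)) + (∫⁻ x, φ x ∂(μ₀.restrict sᶜ)) ≠ ⊤ := by
      have h1 : ∫⁻ x, φ x ∂(μ₁.restrict s) ≤ μ₁ s := by
        calc ∫⁻ x, φ x ∂(μ₁.restrict s) ≤ ∫⁻ _, 1 ∂(μ₁.restrict s) := lintegral_mono hφ1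
          _ = μ₁ s := by rw [lintegral_one, Measure.restrict_apply_univ]
      have h2 : ∫⁻ x, φ x ∂(μ₀.restrict sᶜ) ≤ μ₀ sᶜ := by
        calc ∫⁻ x, φ x ∂(μ₀.restrict sᶜ) ≤ ∫⁻ _, 1 ∂(μ₀.restrict sᶜ) := lintegral_mono hφ1
          _ = μ₀ sᶜ := by rw [lintegral_one, Measure.restrict_apply_univ]
      exact ENNReal.add_ne_top.mpr
        ⟨ne_top_of_le_ne_top (measure_ne_top μ₁ s) h1,
         ne_top_of_le_ne_top (measure_ne_top μ₀ sᶜ) h2⟩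
    have hcancel : ∫⁻ x, φ x ∂ν₀ = ν₀ Set.univ + ∫⁻ x, φ x ∂ν₁ := by
      refine WithTop.add_right_cancel habfin ?_
      calc (∫⁻ x, φ x ∂ν₀) + ((∫⁻ x, φ x ∂(μ₁.restrict s)) + ∫⁻ x, φ x ∂(μ₀.restrict sᶜ))
          = μ₀ s := by rw [← split₀, I₀]
        _ = ν₀ Set.univ + μ₁ s := hmass₀.symm
        _ = ν₀ Set.univ + ((∫⁻ x, φ x ∂ν₁) +
            ((∫⁻ x, φ x ∂(μ₁.restrict s)) + ∫⁻ x, φ x ∂(μ₀.restrict sᶜ))) := by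
            rw [← I₁, split₁]
        _ = (ν₀ Set.univ + ∫⁻ x, φ x ∂ν₁) +
            ((∫⁻ x, φ x ∂(μ₁.restrict s)) + ∫⁻ x, φ x ∂(μ₀.restrict sᶜ)) := by ring
    have hB0 : ∫⁻ x, φ x ∂ν₁ = 0 := by
      have h1 : ν₀ Set.univ + (∫⁻ x, φ x ∂ν₁) ≤ ν₀ Set.univ + 0 := by
        rw [add_zero, ← hcancel]; exact hAle
      exact le_zero_iff.mp ((ENNReal.add_le_add_iff_left hν₀fin).mp h1)
    have hAeq : ∫⁻ x, φ x ∂ν₀ = ν₀ Set.univ := by rw [hcancel, hB0, add_zero]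
    have hν₁pos : 0 < ν₁ Set.univ := by
      rcases eq_or_lt_of_le (zero_le : 0 ≤ ν₁ Set.univ) with h | h
      · exfalso
        rw [← h, zero_add] at hmass₁
        have g0 : μ₀ s + μ₀ sᶜ = 1 := by rw [measure_add_measure_compl hs, measure_univ]
        have g1 : μ₁ s + μ₁ sᶜ = 1 := by rw [measure_add_measure_compl hs, measure_univ]
        have : μ₀ s + μ₀ sᶜ = μ₁ s + μ₀ sᶜ := by rw [g0, hmass₁, ← g1]
        exact heq (WithTop.add_right_cancel (measure_ne_top μ₀ sᶜ) this)
      · exact h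
    have hν₀pos : 0 < ν₀ Set.univ := by
      rcases eq_or_lt_of_le (zero_le : 0 ≤ ν₀ Set.univ) with h | h
      · exfalso
        rw [← h, zero_add] at hmass₀
        exact heq hmass₀.symm
      · exact h
    -- a point where the kernel vanishes on s
    obtain ⟨xm, hxm⟩ : ∃ x, φ x = 0 := by
      by_contra h
      push_neg at h
      have hae := (lintegral_eq_zero_iff hφm).mp hB0
      rw [Filter.EventuallyEq, ae_iff] at hae
      have huniv : {x | ¬ φ x = (0 : EuclideanSpace ℝ (Fin d) → ℝ≥0∞) x} = Set.univ :=
        Set.eq_univ_of_forall fun x => by simpa using h x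
      rw [huniv] at hae
      exact hν₁pos.ne' hae
    -- a point where the kernel is full on s
    have hsub : ∫⁻ x, (1 - φ x) ∂ν₀ = 0 := by
      rw [lintegral_sub hφm (by rw [hAeq]; exact hν₀fin) (Eventually.of_forall hφ1)]
      rw [lintegral_one, hAeq, tsub_self]
    obtain ⟨xp, hxp⟩ : ∃ x, φ x = 1 := by
      have hz := (lintegral_eq_zero_iff (measurable_const.sub hφm)).mp hsub
      rw [Filter.EventuallyEq, ae_iff] at hz
      by_contra h
      push_neg at h
      have huniv : {x | ¬ (1 - φ x) = (0 : EuclideanSpace ℝ (Fin d) → ℝ≥0∞) x} = Set.univ := by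
        refine Set.eq_univ_of_forall fun x => ?_
        simp only [Set.mem_setOf_eq, Pi.zero_apply]
        intro hx
        exact h x (le_antisymm (hφ1 x) (tsub_eq_zero_iff_le.mp hx))
      exact hν₀pos.ne' (by rw [← huniv]; exact hz)
    have hzero := hZero s hs θ₀ xm hxm θ₀ xp
    rw [show κ θ₀ xp s = φ xp from rfl, hxp] at hzero
    exact one_ne_zero hzero
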